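/- Define V : \mathbb{N}^3 \to \mathbb{R} recursively by V(0, b, g) = 0 and, for t \ge 1, V(t, b, g) = max( (1 - (b+g)/t) \cdot V(t-1, b, g) + g/t , (1 - (b+g)/t) \cdot V(t-1, b, g) + (g/t) \cdot V(t-1, b, g-1) + (b/t) \cdot V(t-1, b-1, g) ) (with natural-number subtraction, the terms with coefficient 0 being irrelevant). Then for all natural numbers t, b, g with 1 \le b + g \le t, we have V(t, b, g) \le g/(b+g). -/

import Mathlib

/-- `V t b g` is the optimal probability of accepting a good option when `t`
options remain in a uniformly random order, `g` of them good and `b` bad; the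
first argument of the `max` corresponds to committing and the second to
observing the next option. -/
noncomputable def V : ℕ → ℕ → ℕ → ℝ
  | 0, _, _ => 0
  | t + 1, b, g =>
      max ((1 - ((b : ℝ) + g) / (t + 1)) * V t b g + (g : ℝ) / (t + 1))
        ((1 - ((b : ℝ) + g) / (t + 1)) * V t b g +
          ((g : ℝ) / (t + 1)) * V t b (g - 1) + ((b : ℝ) / (t + 1)) * V t (b - 1) g)

lemma V_key : ∀ t b g : ℕ, b + g ≤ t → V t b g ≤ (g : ℝ) / ((b : ℝ) + g) := by
  intro t
  induction t with
  | zero =>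
    intro b g h
    obtain ⟨rfl, rfl⟩ : b = 0 ∧ g = 0 := by omega
    simp [V]
  | succ t ih =>
    intro b g h
    have ht1 : (0:ℝ) < (t:ℝ) + 1 := by positivity
    have hcast : ((b:ℝ) + g) ≤ (t:ℝ) + 1 := by
      have : (b + g : ℕ) ≤ t + 1 := h
      exact_mod_cast this
    have claim1 : (1 - ((b : ℝ) + g) / (t + 1)) * V t b g
        ≤ (1 - ((b : ℝ) + g) / (t + 1)) * ((g:ℝ)/((b:ℝ)+g)) := by
      by_cases hbg : b + g ≤ t
      · apply mul_le_mul_of_nonneg_left (ih b g hbg)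
        have : ((b:ℝ)+g)/((t:ℝ)+1) ≤ 1 := by
          rw [div_le_one ht1]; exact hcast
        linarith
      · have hbg' : b + g = t + 1 := by omega
        have he : ((b:ℝ)+g) = (t:ℝ)+1 := by exact_mod_cast hbg'
        rw [he, div_self (ne_of_gt ht1)]
        simp
    have claim2 : ((g : ℝ) / ((t:ℝ) + 1)) * V t b (g - 1)
        ≤ ((g : ℝ) / ((t:ℝ) + 1)) * (((g-1:ℕ):ℝ)/((b:ℝ)+((g-1:ℕ):ℝ))) := by
      rcases g with _ | g'
      · simp
      · have hle : b + g' ≤ t := by omega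
        apply mul_le_mul_of_nonneg_left
        · simpa using ih b g' hle
        · positivity
    have claim3 : ((b : ℝ) / ((t:ℝ) + 1)) * V t (b - 1) g
        ≤ ((b : ℝ) / ((t:ℝ) + 1)) * (((g:ℕ):ℝ)/(((b-1:ℕ):ℝ)+(g:ℝ))) := by
      rcases b with _ | b'
      · simp
      · have hle : b' + g ≤ t := by omega
        apply mul_le_mul_of_nonneg_left
        · simpa using ih b' g hle
        · positivity
    show max _ _ ≤ _
    apply max_le
    · -- commit branch
      refine le_trans (add_le_add_left claim1 _) ?_
      rcases Nat.eq_zero_or_pos (b+g) with h0 | hpos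
      · obtain ⟨rfl, rfl⟩ : b = 0 ∧ g = 0 := by omega
        simp
      · have hbgR : (0:ℝ) < (b:ℝ)+g := by
          have : (0:ℕ) < b + g := hpos
          exact_mod_cast this
        have heq : (1 - ((b : ℝ) + g) / ((t:ℝ) + 1)) * ((g:ℝ)/((b:ℝ)+g)) + (g:ℝ)/((t:ℝ)+1)
            = (g:ℝ)/((b:ℝ)+g) := by
          field_simp
          ring
        linarith
    · -- observe branch
      refine le_trans (add_le_add (add_le_add claim1 claim2) claim3) ?_
      rcases g with _ | g'
      · simp
      · rcases b with _ | b'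
        · -- b = 0
          push_cast
          simp only [Nat.cast_zero, zero_add]
          have hg1 : (0:ℝ) < (g':ℝ) + 1 := by positivity
          have hp0 : (0:ℝ) ≤ ((g':ℝ)+1)/((t:ℝ)+1) := by positivity
          have hq : ((g'+1-1:ℕ):ℝ)/(((g'+1-1:ℕ)):ℝ) ≤ 1 := by
            rcases Nat.eq_zero_or_pos g' with h0 | hpos
            · subst h0; norm_num
            · simp only [Nat.add_sub_cancel]
              rw [div_self]
              positivity
          simp only [Nat.add_sub_cancel] at hq
          rw [div_self (ne_of_gt hg1)]
          simp only [zero_div, zero_mul, add_zero, mul_one]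
          linarith [mul_le_of_le_one_right hp0 hq]
        · -- b = b'+1
          apply le_of_eq
          simp only [Nat.add_sub_cancel]
          push_cast
          have d1 : ((b':ℝ) + 1 + ((g':ℝ) + 1)) ≠ 0 := by positivity
          have d2 : ((b':ℝ) + 1 + (g':ℝ)) ≠ 0 := by positivity
          have d3 : ((b':ℝ) + ((g':ℝ) + 1)) ≠ 0 := by positivity
          field_simp
          ring

/-- For all `t, b, g` with `1 ≤ b + g ≤ t`, the optimal probability of
accepting a good option is at most `g/(b+g)`. -/
theorem stmt_11 (t b g : ℕ) (h1 : 1 ≤ b + g) (h2 : b + g ≤ t) :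
    V t b g ≤ (g : ℝ) / ((b : ℝ) + g) := by
  exact V_key t b g h2
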